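/- Let A be an m×n row-stochastic real matrix that has a quantum implementation in dimension d, and let L be an m'×m row-stochastic matrix and R an n×n' row-stochastic matrix. Then the m'×n' row-stochastic matrix B = L·A·R also has a quantum implementation in dimension d (namely with states ρ'_i = Σ_k L_{ik} ρ_k and effects M'_j = Σ_k R_{kj} M_k). -/

import Mathlib

open Matrix BigOperators
open scoped ComplexOrder

/-- A real matrix is row-stochastic if all entries are nonnegative
and each row sums to 1. -/
def RowStochastic {m n : ℕ} (A : Matrix (Fin m) (Fin n) ℝ) : Prop :=
  (∀ i j, 0 ≤ A i j) ∧ ∀ i, ∑ j, A i j = 1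

/-- `A` admits a quantum implementation in dimension `d`: there are states
`ρ i` (PSD, trace one) and POVM effects `M j` (PSD, summing to the identity)
with `A i j = Re (tr (ρ i * M j))`. -/
def QuantumImpl (d m n : ℕ) (A : Matrix (Fin m) (Fin n) ℝ) : Prop :=
  ∃ (ρ : Fin m → Matrix (Fin d) (Fin d) ℂ) (M : Fin n → Matrix (Fin d) (Fin d) ℂ),
    (∀ i, (ρ i).PosSemidef ∧ (ρ i).trace = 1) ∧
    (∀ j, (M j).PosSemidef) ∧ (∑ j, M j = 1) ∧
    (∀ i j, A i j = ((ρ i * M j).trace).re)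

/-- The max monotone `λmax(A) = Σ_j max_i A i j`. -/
noncomputable def lmax {m n : ℕ} (A : Matrix (Fin m) (Fin n) ℝ) : ℝ :=
  ∑ j, ⨆ i, A i j

/-- The min monotone `λmin(A) = −Σ_j min_i A i j`. -/
noncomputable def lmin {m n : ℕ} (A : Matrix (Fin m) (Fin n) ℝ) : ℝ :=
  - ∑ j, ⨅ i, A i j

/-- `UWMaj B A` : `B` is ultraweakly majorized by `A` (i.e. `B ⪯ A`),
meaning `B = L * A * R` for some row-stochastic `L`, `R`. -/
def UWMaj {m' n' m n : ℕ} (B : Matrix (Fin m') (Fin n') ℝ)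
    (A : Matrix (Fin m) (Fin n) ℝ) : Prop :=
  ∃ (L : Matrix (Fin m') (Fin m) ℝ) (R : Matrix (Fin n) (Fin n') ℝ),
    RowStochastic L ∧ RowStochastic R ∧ L * A * R = B


lemma psd_sum_smul {d k : ℕ} (f : Fin k → Matrix (Fin d) (Fin d) ℂ)
    (c : Fin k → ℝ) (hc : ∀ i, 0 ≤ c i) (hf : ∀ i, (f i).PosSemidef) :
    (∑ i, ((c i : ℂ) • f i)).PosSemidef := by
  rw [Matrix.posSemidef_iff_dotProduct_mulVec]
  constructor
  · show (∑ i, ((c i : ℂ) • f i))ᴴ = _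
    rw [Matrix.conjTranspose_sum]
    refine Finset.sum_congr rfl fun i _ => ?_
    rw [Matrix.conjTranspose_smul, (hf i).1.eq, Complex.star_def, Complex.conj_ofReal]
  · intro x
    have hsum : (∑ i, ((c i : ℂ) • f i)) *ᵥ x = ∑ i, ((c i : ℂ) • f i) *ᵥ x :=
      map_sum (Matrix.mulVec.addMonoidHomLeft x) _ Finset.univ
    have h2 : star x ⬝ᵥ ∑ i, ((c i : ℂ) • f i) *ᵥ x
        = ∑ i, star x ⬝ᵥ (((c i : ℂ) • f i) *ᵥ x) := by
      simp only [dotProduct, Finset.mul_sum, Pi.smul_apply, Finset.sum_apply]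
      exact Finset.sum_comm
    rw [hsum, h2]
    apply Finset.sum_nonneg
    intro i _
    rw [Matrix.smul_mulVec, dotProduct_smul]
    exact smul_nonneg (by rw [Complex.zero_le_real]; exact hc i) ((hf i).dotProduct_mulVec_nonneg x)

/-- pre- and post-processing a quantum-implementable matrix with
row-stochastic matrices yields a quantum-implementable matrix in the same dimension. -/
theorem quantumImpl_of_processing (d m n m' n' : ℕ)
    (A : Matrix (Fin m) (Fin n) ℝ) (hA : RowStochastic A)
    (hQ : QuantumImpl d m n A)
    (L : Matrix (Fin m') (Fin m) ℝ) (hL : RowStochastic L)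
    (R : Matrix (Fin n) (Fin n') ℝ) (hR : RowStochastic R) :
    QuantumImpl d m' n' (L * A * R) := by
  
  obtain ⟨ρ, M, hρ, hM, hMsum, hAeq⟩ := hQ
  refine ⟨fun i => ∑ k, ((L i k : ℂ)) • ρ k, fun j => ∑ k, ((R k j : ℂ)) • M k,
    ?_, ?_, ?_, ?_⟩
  · intro i
    refine ⟨psd_sum_smul _ _ (fun k => hL.1 i k) (fun k => (hρ k).1), ?_⟩
    rw [Matrix.trace_sum]
    simp only [Matrix.trace_smul, smul_eq_mul]
    have : ∀ k, (ρ k).trace = 1 := fun k => (hρ k).2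
    simp only [this, mul_one]
    rw [← Complex.ofReal_sum, hL.2 i, Complex.ofReal_one]
  · intro j
    exact psd_sum_smul _ _ (fun k => hR.1 k j) (fun k => hM k)
  · rw [Finset.sum_comm]
    calc ∑ k, ∑ j, ((R k j : ℂ)) • M k
        = ∑ k, ((∑ j, R k j : ℝ) : ℂ) • M k := by
          refine Finset.sum_congr rfl fun k _ => ?_
          rw [← Finset.sum_smul, Complex.ofReal_sum]
      _ = ∑ k, M k := by
          refine Finset.sum_congr rfl fun k _ => ?_
          rw [hR.2 k, Complex.ofReal_one, one_smul]
      _ = 1 := hMsum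
  · intro i j
    have hexp : (∑ k, ((L i k : ℂ)) • ρ k) * (∑ l, ((R l j : ℂ)) • M l)
        = ∑ k, ∑ l, ((L i k : ℂ) * (R l j : ℂ)) • (ρ k * M l) := by
      rw [Finset.sum_mul_sum]
      refine Finset.sum_congr rfl fun k _ => Finset.sum_congr rfl fun l _ => ?_
      rw [smul_mul_assoc, mul_smul_comm, smul_smul]
    rw [hexp]
    rw [Matrix.trace_sum]
    simp only [Matrix.trace_sum, Matrix.trace_smul, smul_eq_mul, ← Complex.ofReal_mul,
      Complex.re_sum, Complex.re_ofReal_mul]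
    simp only [← hAeq]
    rw [Matrix.mul_apply]
    conv_rhs => rw [Finset.sum_comm]
    refine Finset.sum_congr rfl fun l _ => ?_
    rw [Matrix.mul_apply, Finset.sum_mul]
    refine Finset.sum_congr rfl fun k _ => ?_
    ring
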